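/- arXiv:1701.06942 — 5 statements merged into one kernel-verified Lean document; each statement's English description precedes it below -/
import Mathlib

section
/- For every integer n ≥ 1 and every integer m with -(n+1) ≤ m ≤ n+1 and |m| ≤ n-1, one has (m/(n+1))^2 · (1/2 + n/(n^2+1)) ≤ 1/2 - n/(n^2+1). -/
theorem stmt_0 (n : ℤ) (hn : 1 ≤ n) (m : ℤ) (h1 : -(n+1) ≤ m) (h2 : m ≤ n+1)
    (h3 : |m| ≤ n - 1) :
    ((m : ℝ)/(n+1))^2 * (1/2 + n/(n^2+1)) ≤ 1/2 - n/(n^2+1) := by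
  have hnR : (1:ℝ) ≤ (n:ℝ) := by exact_mod_cast hn
  have h1pos : (0:ℝ) < (n:ℝ) + 1 := by linarith
  have h2pos : (0:ℝ) < (n:ℝ)^2 + 1 := by positivity
  have habs : |(m:ℝ)| ≤ (n:ℝ) - 1 := by
    push_cast [← Int.cast_abs]
    exact_mod_cast h3
  have hm2 : (m:ℝ)^2 ≤ ((n:ℝ) - 1)^2 := by
    nlinarith [sq_abs (m:ℝ), abs_nonneg (m:ℝ)]
  have hL : ((m : ℝ)/(n+1))^2 * (1/2 + n/(n^2+1)) = (m:ℝ)^2 / (2*((n:ℝ)^2+1)) := by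
    field_simp
    ring
  have hR : (1:ℝ)/2 - n/(n^2+1) = ((n:ℝ)-1)^2 / (2*((n:ℝ)^2+1)) := by
    field_simp
    ring
  rw [hL, hR]
  gcongr
end

section
/- Let n ≥ 2 be an integer, ε a real number with 0 ≤ ε < 1/2, and p(s) = a·(s - v)^2 + c a real quadratic with a ≥ 0, c ≥ 0 (so p is nonnegative everywhere), satisfying p(0) ≤ ε, p(n-1) ≤ ε, and p(n) ≥ 1-ε. Then ε ≥ 1/2 - n/(n^2+1). -/
theorem stmt_6 (n : ℤ) (hn : 2 ≤ n) (ε a v c : ℝ) (hε0 : 0 ≤ ε) (hε1 : ε < 1/2)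
    (ha : 0 ≤ a) (hc : 0 ≤ c)
    (p : ℝ → ℝ) (hp : ∀ s, p s = a * (s - v)^2 + c)
    (h0 : p 0 ≤ ε) (h1 : p ((n : ℝ) - 1) ≤ ε) (h2 : p (n : ℝ) ≥ 1 - ε) :
    ε ≥ 1/2 - (n : ℝ)/((n : ℝ)^2+1) := by
  have hN : (2:ℝ) ≤ (n:ℝ) := by exact_mod_cast hn
  rw [hp] at h0 h1 h2
  set N := (n:ℝ) with hNdef
  have e1 : 0 ≤ (N*(N+1)) * (ε - (a*((N-1) - v)^2 + c)) := by
    apply mul_nonneg (by nlinarith) (by nlinarith [h1])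
  have e2 : 0 ≤ (N+1) * (ε - (a*(0 - v)^2 + c)) := by
    apply mul_nonneg (by nlinarith) (by nlinarith [h0])
  have e3 : 0 ≤ (N-1)^2 * ((a*(N - v)^2 + c) - (1-ε)) := by
    apply mul_nonneg (by positivity) (by nlinarith [h2])
  have e4 : 0 ≤ 4*N*(a * ((N-1)/2 - v)^2) := by
    apply mul_nonneg (by nlinarith) (mul_nonneg ha (sq_nonneg _))
  have e5 : 0 ≤ 4*N*c := by
    apply mul_nonneg (by nlinarith) hc
  have key : 2*ε*(N^2+1) ≥ (N-1)^2 := by nlinarith [e1, e2, e3, e4, e5]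
  have hpos : (0:ℝ) < N^2+1 := by positivity
  have heq : 1/2 - N/(N^2+1) = (N-1)^2/(2*(N^2+1)) := by
    field_simp
    ring
  rw [heq, ge_iff_le, div_le_iff₀ (by positivity)]
  nlinarith [key]
end

section
/- Let n ≥ 2 be an integer, ε a real with 0 ≤ ε ≤ 1/2, and p a real polynomial of degree at most 2 that is nonnegative on the interval [0, n], with p(0) ≤ ε, p(n-1) ≤ ε, and p(n) ≥ 1-ε. Then ε ≥ 1/2 - n/(n^2+1). -/
theorem stmt_7 (n : ℤ) (hn : 2 ≤ n) (ε : ℝ) (hε0 : 0 ≤ ε) (hε1 : ε ≤ 1/2)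
    (p : Polynomial ℝ) (hdeg : p.natDegree ≤ 2)
    (hnonneg : ∀ s ∈ Set.Icc (0 : ℝ) (n : ℝ), 0 ≤ p.eval s)
    (h0 : p.eval 0 ≤ ε) (h1 : p.eval ((n : ℝ) - 1) ≤ ε)
    (h2 : p.eval (n : ℝ) ≥ 1 - ε) :
    ε ≥ 1/2 - (n : ℝ)/((n : ℝ)^2+1) := by
  set m : ℝ := (n : ℝ) with hm
  have hm2 : (2 : ℝ) ≤ m := by rw [hm]; exact_mod_cast hn
  set a := p.coeff 2
  set b := p.coeff 1
  set c := p.coeff 0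
  have heval : ∀ x : ℝ, p.eval x = a * x ^ 2 + b * x + c := by
    intro x
    have h3 : p.natDegree < 3 := lt_of_le_of_lt hdeg (by norm_num)
    rw [Polynomial.eval_eq_sum_range' h3]
    simp [Finset.sum_range_succ]
    ring
  have ht : ((m - 1) / 2) ∈ Set.Icc (0 : ℝ) m := by
    constructor <;> [linarith; linarith]
  have hpt := hnonneg _ ht
  rw [heval] at hpt h0 h1 h2
  have hm0 : (0 : ℝ) < m := by linarith
  -- key Lagrange combination
  have key : 0 ≤ (m + 1) * (a * 0 ^ 2 + b * 0 + c)
      + m * (m + 1) * (a * (m - 1) ^ 2 + b * (m - 1) + c)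
      - (m - 1) ^ 2 * (a * m ^ 2 + b * m + c) := by
    have : (m + 1) * (a * 0 ^ 2 + b * 0 + c)
      + m * (m + 1) * (a * (m - 1) ^ 2 + b * (m - 1) + c)
      - (m - 1) ^ 2 * (a * m ^ 2 + b * m + c)
      = 4 * m * (a * ((m - 1) / 2) ^ 2 + b * ((m - 1) / 2) + c) := by ring
    rw [this]
    positivity
  have hbound : (m - 1) ^ 2 ≤ 2 * ε * (m ^ 2 + 1) := by nlinarith
  have hms : (0 : ℝ) < m ^ 2 + 1 := by positivity
  have : 1 / 2 - m / (m ^ 2 + 1) = (m - 1) ^ 2 / (2 * (m ^ 2 + 1)) := by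
    field_simp; ring
  rw [ge_iff_le, this, div_le_iff₀ (by positivity)]
  linarith
end

section
/- For every integer n ≥ 2 and any real polynomial p of degree at most 2 with p((n-1)/2) ≥ 0, p(0) ≤ ε, p(n-1) ≤ ε, and p(n) ≥ 1-ε where 0 ≤ ε ≤ 1/2, one has ε ≥ 1/2 - n/(n^2+1). -/
theorem stmt_8 (n : ℤ) (hn : 2 ≤ n) (ε : ℝ) (hε0 : 0 ≤ ε) (hε1 : ε ≤ 1/2)
    (p : Polynomial ℝ) (hdeg : p.natDegree ≤ 2)
    (hmid : 0 ≤ p.eval (((n : ℝ) - 1)/2))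
    (h0 : p.eval 0 ≤ ε) (h1 : p.eval ((n : ℝ) - 1) ≤ ε)
    (h2 : p.eval (n : ℝ) ≥ 1 - ε) :
    ε ≥ 1/2 - (n : ℝ)/((n : ℝ)^2+1) := by
  have hev : ∀ x : ℝ, p.eval x = p.coeff 0 + p.coeff 1 * x + p.coeff 2 * x ^ 2 := by
    intro x
    rw [Polynomial.eval_eq_sum_range' (lt_of_le_of_lt hdeg (by norm_num : (2:ℕ) < 3))]
    simp [Finset.sum_range_succ]
  have hN : (2:ℝ) ≤ (n:ℝ) := by exact_mod_cast hn
  set N : ℝ := (n : ℝ) with hNdef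
  have key : 4 * N * (p.eval ((N - 1)/2)) =
      (N+1) * p.eval 0 + N*(N+1) * p.eval (N-1) - (N-1)^2 * p.eval N := by
    rw [hev, hev, hev, hev]; ring
  have hmid' : 0 ≤ 4 * N * (p.eval ((N - 1)/2)) := by positivity
  rw [key] at hmid'
  have hA : (N-1)^2 * (1-ε) ≤ (N+1)^2 * ε := by
    nlinarith [mul_nonneg (show (0:ℝ) ≤ N+1 by linarith) (sub_nonneg.2 h0),
      mul_nonneg (mul_nonneg (show (0:ℝ) ≤ N by linarith) (show (0:ℝ) ≤ N+1 by linarith))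
        (sub_nonneg.2 h1),
      mul_nonneg (sq_nonneg (N-1)) (sub_nonneg.2 h2)]
  have hpos : (0:ℝ) < N^2 + 1 := by positivity
  have heq : 1/2 - N/(N^2+1) = (N-1)^2 / (2*(N^2+1)) := by
    field_simp; ring
  rw [ge_iff_le, heq, div_le_iff₀ (by positivity)]
  nlinarith
end

section
/- Suppose a one-query quantum algorithm computes AND_n with worst-case error probability ε. Then there exists a real polynomial p of degree at most 2, nonnegative on [0, n], with p(s) ≤ ε for s ∈ {0, n-1} and p(n) ≥ 1 - ε. Consequently ε ≥ 1/2 - n/(n^2+1). -/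
lemma mono_classify {n : ℕ} (m : Fin n →₀ ℕ) (h : (m.sum fun _ e => e) ≤ 1) :
    m = 0 ∨ ∃ j, m = Finsupp.single j 1 := by
  by_cases h0 : m = 0
  · exact Or.inl h0
  · right
    obtain ⟨j, hj⟩ := Finsupp.support_nonempty_iff.2 h0
    have hmj : 1 ≤ m j := Nat.one_le_iff_ne_zero.2 (Finsupp.mem_support_iff.1 hj)
    have hsum : m.sum (fun _ e => e) = m j + ∑ k ∈ m.support.erase j, m k := by
      rw [Finsupp.sum, ← Finset.add_sum_erase _ m hj]
    refine ⟨j, ?_⟩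
    ext k
    rcases eq_or_ne k j with rfl | hk
    · rw [Finsupp.single_eq_same]
      omega
    · rw [Finsupp.single_apply, if_neg (Ne.symm hk)]
      by_contra hmk
      have hk' : k ∈ m.support.erase j := Finset.mem_erase.2 ⟨hk, Finsupp.mem_support_iff.2 hmk⟩
      have hle2 : m k ≤ ∑ k ∈ m.support.erase j, m k :=
        Finset.single_le_sum (fun _ _ => Nat.zero_le _) hk'
      omega

open MvPolynomial in
lemma eval_affine {n : ℕ} (q : MvPolynomial (Fin n) ℝ) (h : q.totalDegree ≤ 1)
    (z : Fin n → ℝ) :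
    MvPolynomial.eval z q = q.coeff 0 + ∑ j, q.coeff (Finsupp.single j 1) * z j := by
  have hq : q = C (q.coeff 0) + ∑ j, C (q.coeff (Finsupp.single j 1)) * X j := by
    ext m
    rw [coeff_add, coeff_C, MvPolynomial.coeff_sum]
    simp only [coeff_C_mul, coeff_X']
    by_cases h0 : m = 0
    · subst h0
      simp [Finsupp.single_eq_zero]
    · rw [if_neg (fun hh => h0 hh.symm)]
      by_cases hs : ∃ j, m = Finsupp.single j 1
      · obtain ⟨j, rfl⟩ := hs
        rw [Finset.sum_eq_single j]
        · simp
        · intro b _ hbj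
          rw [if_neg, mul_zero]
          exact fun he => hbj (Finsupp.single_left_injective (by norm_num : (1:ℕ) ≠ 0) he)
        · intro hj; exact absurd (Finset.mem_univ j) hj
      · have hns : m ∉ q.support := by
          intro hm
          rcases mono_classify m (le_trans (MvPolynomial.le_totalDegree hm) h) with h' | h'
          · exact h0 h'
          · exact hs h'
        rw [MvPolynomial.notMem_support_iff.1 hns]
        rw [Finset.sum_eq_zero, zero_add]
        intro j _
        rw [if_neg, mul_zero]
        exact fun he => hs ⟨j, he.symm⟩
  conv_lhs => rw [hq]
  simp [mul_comm]


lemma quad_bound (n : ℕ) (hn : 1 ≤ n) (ε : ℝ) (hε : 0 ≤ ε) (p : Polynomial ℝ)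
    (hdeg : p.natDegree ≤ 2)
    (hnonneg : ∀ s ∈ Set.Icc (0 : ℝ) (n : ℝ), 0 ≤ p.eval s)
    (h0 : p.eval 0 ≤ ε) (h1 : p.eval ((n : ℝ) - 1) ≤ ε)
    (h2 : p.eval (n : ℝ) ≥ 1 - ε) :
    ε ≥ 1/2 - (n : ℝ)/((n : ℝ)^2+1) := by
  rcases eq_or_lt_of_le hn with h1n | h2n
  · rw [← h1n]; norm_num; exact hε
  have hn2' : (2 : ℝ) ≤ (n : ℝ) := by exact_mod_cast h2n
  set a := p.coeff 2 with ha
  set b := p.coeff 1 with hb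
  set c := p.coeff 0 with hc
  have heval : ∀ s : ℝ, p.eval s = c + b * s + a * s^2 := by
    intro s
    rw [Polynomial.eval_eq_sum_range' (lt_of_le_of_lt hdeg (by norm_num : (2:ℕ) < 3))]
    simp [Finset.sum_range_succ]
    try ring
  set t : ℝ := ((n : ℝ) - 1)/2 with htdef
  have ht : 0 ≤ p.eval t := hnonneg t ⟨by nlinarith, by nlinarith⟩
  rw [heval] at h0 h1 h2 ht
  -- Lagrange identity: ((n-1))^2 * p(n) = (n+1)*p(0) - 4n*p(t) + n(n+1)*p(n-1)
  have hid : ((n:ℝ)-1)^2 * (c + b*(n:ℝ) + a*(n:ℝ)^2) =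
      ((n:ℝ)+1) * (c + b*0 + a*0^2) - 4*(n:ℝ) * (c + b*t + a*t^2)
        + (n:ℝ)*((n:ℝ)+1) * (c + b*((n:ℝ)-1) + a*((n:ℝ)-1)^2) := by
    rw [htdef]; ring
  have key : ((n:ℝ)-1)^2 ≤ (2*(n:ℝ)^2 + 2) * ε := by
    nlinarith [sq_nonneg ((n:ℝ)-1), mul_le_mul_of_nonneg_left h0 (by linarith : (0:ℝ) ≤ (n:ℝ)+1),
      mul_le_mul_of_nonneg_left h1 (by nlinarith : (0:ℝ) ≤ (n:ℝ)*((n:ℝ)+1)),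
      mul_le_mul_of_nonneg_left h2 (sq_nonneg ((n:ℝ)-1)),
      mul_nonneg (by linarith : (0:ℝ) ≤ 4*(n:ℝ)) ht]
  have hpos : (0:ℝ) < (n:ℝ)^2 + 1 := by positivity
  have heq : 1/2 - (n : ℝ)/((n : ℝ)^2+1) = ((n:ℝ)-1)^2 / (2*((n:ℝ)^2+1)) := by
    field_simp
    ring
  rw [ge_iff_le, heq, div_le_iff₀ (by positivity)]
  linarith [key]


lemma construct_p {n m : ℕ} (hn : 1 ≤ n) (ε : ℝ) (α : Fin m → ℝ) (β : Fin m → Fin n → ℝ)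
    (S1 : 1 - ε ≤ ∑ i, (α i - ∑ j, β i j)^2)
    (S0 : ∑ i, (α i + ∑ j, β i j)^2 ≤ ε)
    (Sk : ∀ k, ∑ i, (α i - (∑ j, β i j) + 2 * β i k)^2 ≤ ε) :
    ∃ p : Polynomial ℝ, p.natDegree ≤ 2 ∧
      (∀ s ∈ Set.Icc (0:ℝ) (n:ℝ), 0 ≤ p.eval s) ∧
      p.eval 0 ≤ ε ∧ p.eval ((n:ℝ)-1) ≤ ε ∧ p.eval (n:ℝ) ≥ 1 - ε := by
  have hnpos : (0:ℝ) < (n:ℝ) := by exact_mod_cast hn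
  have hn0 : (n:ℝ) ≠ 0 := ne_of_gt hnpos
  set c : Fin m → ℝ := fun i => ∑ j, β i j with hcdef
  set d : Fin m → ℝ := fun i => ∑ j, (β i j)^2 with hddef
  set e : Fin m → ℝ := fun i => d i - (c i)^2 / (n:ℝ) with hedef
  have he : ∀ i, 0 ≤ e i := by
    intro i
    have hcs : (c i)^2 ≤ (n:ℝ) * d i := by
      have := sq_sum_le_card_mul_sum_sq (s := (Finset.univ : Finset (Fin n))) (f := β i)
      simpa [hcdef, hddef] using this
    rw [hedef]
    simp only
    rw [sub_nonneg, div_le_iff₀ hnpos]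
    linarith
  set p : Polynomial ℝ :=
    Polynomial.C (∑ i, (α i + c i)^2)
      + Polynomial.C (∑ i, (-4/(n:ℝ)) * (α i * c i + ((c i)^2 - e i))) * Polynomial.X
      + Polynomial.C (∑ i, (4/(n:ℝ)^2) * ((c i)^2 - e i)) * Polynomial.X^2 with hpdef
  have hpev : ∀ s : ℝ, p.eval s
      = ∑ i, ((α i + c i * (1-2*s/(n:ℝ)))^2 + (1-(1-2*s/(n:ℝ))^2) * e i) := by
    intro s
    rw [hpdef]
    simp only [Polynomial.eval_add, Polynomial.eval_mul, Polynomial.eval_C, Polynomial.eval_X,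
      Polynomial.eval_pow]
    rw [Finset.sum_mul, Finset.sum_mul, ← Finset.sum_add_distrib, ← Finset.sum_add_distrib]
    apply Finset.sum_congr rfl
    intro i _
    rw [hedef]
    simp only
    field_simp
    ring
  have hdegp : p.natDegree ≤ 2 := by
    rw [hpdef]
    compute_degree
  refine ⟨p, hdegp, ?_, ?_, ?_, ?_⟩
  · intro s hs
    rw [hpev s]
    apply Finset.sum_nonneg
    intro i _
    have hu : 0 ≤ 1 - (1-2*s/(n:ℝ))^2 := by
      have h1 : 0 ≤ s / (n:ℝ) := div_nonneg hs.1 (le_of_lt hnpos)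
      have h2 : s / (n:ℝ) ≤ 1 := (div_le_one hnpos).2 hs.2
      have : 2*s/(n:ℝ) = 2*(s/(n:ℝ)) := by ring
      rw [this]
      nlinarith
    have := mul_nonneg hu (he i)
    positivity
  · rw [hpev 0]
    have : ∀ i : Fin m, (α i + c i * (1-2*0/(n:ℝ)))^2 + (1-(1-2*0/(n:ℝ))^2) * e i
        = (α i + c i)^2 := by intro i; field_simp; ring
    rw [Finset.sum_congr rfl (fun i _ => this i)]
    exact S0
  · -- p(n-1) ≤ ε
    rw [hpev ((n:ℝ)-1)]
    have hsum : ∑ k : Fin n, (∑ i, (α i - (∑ j, β i j) + 2 * β i k)^2) ≤ (n:ℝ) * ε := by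
      calc ∑ k : Fin n, (∑ i, (α i - (∑ j, β i j) + 2 * β i k)^2)
          ≤ ∑ _k : Fin n, ε := Finset.sum_le_sum (fun k _ => Sk k)
        _ = (n:ℝ) * ε := by simp [mul_comm]
    rw [Finset.sum_comm] at hsum
    have hexp : ∀ i, ∑ k : Fin n, (α i - (∑ j, β i j) + 2 * β i k)^2
        = (n:ℝ)*(α i - c i)^2 + 4*(α i - c i)*(c i) + 4*d i := by
      intro i
      have h1 : ∀ k : Fin n, (α i - (∑ j, β i j) + 2 * β i k)^2
          = (α i - c i)^2 + (4*(α i - c i))*β i k + 4*(β i k)^2 := by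
        intro k; rw [hcdef]; ring
      rw [Finset.sum_congr rfl (fun k _ => h1 k)]
      rw [Finset.sum_add_distrib, Finset.sum_add_distrib, Finset.sum_const, ← Finset.mul_sum,
        ← Finset.mul_sum]
      rw [hcdef, hddef]
      simp [Finset.card_univ, nsmul_eq_mul]
      try ring
    rw [Finset.sum_congr rfl (fun i _ => hexp i)] at hsum
    -- per-i: n * (term i) + (4/n) * e i = n*(α-c)^2+4*(α-c)*c+4*d
    have hkey : (n:ℝ) * (∑ i, ((α i + c i * (1-2*((n:ℝ)-1)/(n:ℝ)))^2
          + (1-(1-2*((n:ℝ)-1)/(n:ℝ))^2) * e i))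
        ≤ ∑ i, ((n:ℝ)*(α i - c i)^2 + 4*(α i - c i)*(c i) + 4*d i) := by
      rw [Finset.mul_sum]
      apply Finset.sum_le_sum
      intro i _
      have hid : (n:ℝ) * ((α i + c i * (1-2*((n:ℝ)-1)/(n:ℝ)))^2
            + (1-(1-2*((n:ℝ)-1)/(n:ℝ))^2) * e i) + (4/(n:ℝ)) * e i
          = (n:ℝ)*(α i - c i)^2 + 4*(α i - c i)*(c i) + 4*d i := by
        rw [hedef]
        simp only
        field_simp
        ring
      have h4e : 0 ≤ (4/(n:ℝ)) * e i := mul_nonneg (by positivity) (he i)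
      linarith
    exact le_of_mul_le_mul_left (le_trans hkey hsum) hnpos
  · rw [hpev (n:ℝ)]
    have : ∀ i : Fin m, (α i + c i * (1-2*(n:ℝ)/(n:ℝ)))^2 + (1-(1-2*(n:ℝ)/(n:ℝ))^2) * e i
        = (α i - c i)^2 := by intro i; field_simp; ring
    rw [Finset.sum_congr rfl (fun i _ => this i)]
    exact S1

/-- `AND_n` of a Boolean input. -/
def ANDn {n : ℕ} (x : Fin n → Bool) : Bool := decide (∀ i, x i = true)

theorem stmt_17 (n : ℕ) (hn : 1 ≤ n) (ε : ℝ) (hε : 0 ≤ ε)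
    -- acceptance probability of the one-query algorithm, as a sum of squares of
    -- multilinear polynomials of degree ≤ 1 in the signs x̂ᵢ = (-1)^{xᵢ}
    (A : (Fin n → Bool) → ℝ) (m : ℕ) (q : Fin m → MvPolynomial (Fin n) ℝ)
    (hdeg : ∀ i, (q i).totalDegree ≤ 1)
    (hA : ∀ x : Fin n → Bool,
      A x = ∑ i, (MvPolynomial.eval (fun j => if x j then (-1 : ℝ) else 1) (q i))^2)
    -- the algorithm computes ANDₙ with worst-case error probability ε
    (hcorrect : ∀ x : Fin n → Bool,
      (ANDn x = true → A x ≥ 1 - ε) ∧ (ANDn x = false → A x ≤ ε)) :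
    (∃ p : Polynomial ℝ, p.natDegree ≤ 2 ∧
      (∀ s ∈ Set.Icc (0 : ℝ) (n : ℝ), 0 ≤ p.eval s) ∧
      p.eval 0 ≤ ε ∧ p.eval ((n : ℝ) - 1) ≤ ε ∧ p.eval (n : ℝ) ≥ 1 - ε) ∧
    ε ≥ 1/2 - (n : ℝ)/((n : ℝ)^2+1) := by
  have hP : (∃ p : Polynomial ℝ, p.natDegree ≤ 2 ∧
      (∀ s ∈ Set.Icc (0 : ℝ) (n : ℝ), 0 ≤ p.eval s) ∧
      p.eval 0 ≤ ε ∧ p.eval ((n : ℝ) - 1) ≤ ε ∧ p.eval (n : ℝ) ≥ 1 - ε) := by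
    set α : Fin m → ℝ := fun i => (q i).coeff 0 with hα
    set β : Fin m → Fin n → ℝ := fun i j => (q i).coeff (Finsupp.single j 1) with hβ
    -- all-true input
    have S1 : 1 - ε ≤ ∑ i, (α i - ∑ j, β i j)^2 := by
      have hand : ANDn (fun _ : Fin n => true) = true := by simp [ANDn]
      have := (hcorrect (fun _ => true)).1 hand
      rw [hA] at this
      have heq : ∀ i : Fin m,
          (MvPolynomial.eval (fun j => if (fun _ : Fin n => true) j then (-1:ℝ) else 1) (q i))^2
          = (α i - ∑ j, β i j)^2 := by
        intro i
        rw [eval_affine (q i) (hdeg i)]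
        simp [hα, hβ, Finset.sum_neg_distrib, sub_eq_add_neg]
      rw [Finset.sum_congr rfl (fun i _ => heq i)] at this
      linarith
    -- all-false input
    have S0 : ∑ i, (α i + ∑ j, β i j)^2 ≤ ε := by
      have hand : ANDn (fun _ : Fin n => false) = false := by
        unfold ANDn
        rw [decide_eq_false_iff_not]
        push_neg
        exact ⟨⟨0, hn⟩, by simp⟩
      have := (hcorrect (fun _ => false)).2 hand
      rw [hA] at this
      have heq : ∀ i : Fin m,
          (MvPolynomial.eval (fun j => if (fun _ : Fin n => false) j then (-1:ℝ) else 1) (q i))^2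
          = (α i + ∑ j, β i j)^2 := by
        intro i
        rw [eval_affine (q i) (hdeg i)]
        simp [hα, hβ]
      rw [Finset.sum_congr rfl (fun i _ => heq i)] at this
      exact this
    -- weight n-1 inputs
    have Sk : ∀ k, ∑ i, (α i - (∑ j, β i j) + 2 * β i k)^2 ≤ ε := by
      intro k
      have hand : ANDn (fun j : Fin n => decide (j ≠ k)) = false := by
        unfold ANDn
        rw [decide_eq_false_iff_not]
        push_neg
        exact ⟨k, by simp⟩
      have := (hcorrect (fun j => decide (j ≠ k))).2 hand
      rw [hA] at this
      have heq : ∀ i : Fin m,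
          (MvPolynomial.eval (fun j => if (fun j : Fin n => decide (j ≠ k)) j then (-1:ℝ) else 1) (q i))^2
          = (α i - (∑ j, β i j) + 2 * β i k)^2 := by
        intro i
        rw [eval_affine (q i) (hdeg i)]
        have hz : ∀ j : Fin n, (if (decide (j ≠ k) : Bool) then (-1:ℝ) else 1)
            = (if j = k then (2:ℝ) else 0) - 1 := by
          intro j
          rcases eq_or_ne j k with rfl | hj
          · norm_num
          · simp [hj]
        have hsum2 : ∑ j, β i j * ((if (decide (j ≠ k) : Bool) then (-1:ℝ) else 1))
            = 2 * β i k - ∑ j, β i j := by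
          rw [Finset.sum_congr rfl (fun j _ => by rw [hz j])]
          have : ∀ j : Fin n, β i j * ((if j = k then (2:ℝ) else 0) - 1)
              = (if j = k then 2 * β i j else 0) - β i j := by
            intro j; split <;> ring
          rw [Finset.sum_congr rfl (fun j _ => this j), Finset.sum_sub_distrib]
          simp
        simp only
        rw [hsum2]
        ring
      rw [Finset.sum_congr rfl (fun i _ => heq i)] at this
      exact this
    exact construct_p hn ε α β S1 S0 Sk
  obtain ⟨p, hd2, hnn, h0, h1, h2⟩ := hP
  exact ⟨⟨p, hd2, hnn, h0, h1, h2⟩, quad_bound n hn ε hε p hd2 hnn h0 h1 h2⟩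
end
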